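/- Let g ∈ ℋ_α for some α ∈ (0, 1]. Then for every M > 0 there exists C > 0 such that for all θ, θ' in the closed ball of radius M centered at 0 in ℝ^d and all n ∈ ℕ*, E((M_n(θ, g) − M_n(θ', g))²) ≤ C |θ − θ'|^{2α} / n. -/

import Mathlib

set_option maxHeartbeats 1000000


open MeasureTheory ProbabilityTheory Filter Real Topology

noncomputable section

/-- Euclidean norm on `ℝ^k`. -/
def nrm {k : ℕ} (x : Fin k → ℝ) : ℝ := Real.sqrt (∑ i, x i ^ 2)

/-- Euclidean inner (dot) product on `ℝ^k`. -/
def dot {k : ℕ} (x y : Fin k → ℝ) : ℝ := ∑ i, x i * y i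

/-- The standard Gaussian measure on `ℝ^d`. -/
def stdGaussian (d : ℕ) : Measure (Fin d → ℝ) :=
  MeasureTheory.Measure.pi fun _ => ProbabilityTheory.gaussianReal 0 1

/-- `v^f(θ) = E(f²(G) e^{-θ·G + |θ|²/2})`. -/
def vF {d : ℕ} (f : (Fin d → ℝ) → ℝ) (θ : Fin d → ℝ) : ℝ :=
  ∫ x, f x ^ 2 * Real.exp (-(dot θ x) + nrm θ ^ 2 / 2) ∂ stdGaussian d

/-- `v^{f,A}(ϑ) = v^f(Aϑ)`. -/
def vFA {d d' : ℕ} (A : Matrix (Fin d) (Fin d') ℝ) (f : (Fin d → ℝ) → ℝ)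
    (ϑ : Fin d' → ℝ) : ℝ :=
  vF f (A.mulVec ϑ)

/-- The sample average approximation `v_n^{f,A}`. -/
def vnFA {d d' : ℕ} {Ω : Type*} (Gs : ℕ → Ω → Fin d → ℝ)
    (A : Matrix (Fin d) (Fin d') ℝ) (f : (Fin d → ℝ) → ℝ) (n : ℕ) (ω : Ω)
    (ϑ : Fin d' → ℝ) : ℝ :=
  (1 / n : ℝ) * ∑ i ∈ Finset.range n,
    f (Gs i ω) ^ 2 * Real.exp (-(dot (A.mulVec ϑ) (Gs i ω)) + nrm (A.mulVec ϑ) ^ 2 / 2)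

/-- The importance sampling estimator `M_n(θ, g)`. -/
def Mn {d : ℕ} {Ω : Type*} (Gs : ℕ → Ω → Fin d → ℝ) (n : ℕ) (θ : Fin d → ℝ)
    (g : (Fin d → ℝ) → ℝ) (ω : Ω) : ℝ :=
  (1 / n : ℝ) * ∑ i ∈ Finset.range n,
    g (Gs i ω + θ) * Real.exp (-(dot θ (Gs i ω)) - nrm θ ^ 2 / 2)

/-- The Hölder class `ℋ_α`. -/
def MemH {d : ℕ} (α : ℝ) (g : (Fin d → ℝ) → ℝ) : Prop :=
  ∃ β ∈ Set.Ico (0 : ℝ) 2, ∃ lam > (0 : ℝ),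
    (∀ x, |g x| ≤ lam * Real.exp (nrm x ^ β)) ∧
    ∀ x y, |g x - g y| ≤ lam * Real.exp (max (nrm x ^ β) (nrm y ^ β)) * nrm (x - y) ^ α

/-- `𝒜`-monotonicity of a function on `ℝ^d` for a vector `𝒜 ∈ ℝ^d`. -/
def AMonotonic {d : ℕ} (𝒜 : Fin d → ℝ) (h : (Fin d → ℝ) → ℝ) : Prop :=
  (∀ x, Monotone fun ϑ : ℝ => h (x + ϑ • 𝒜)) ∨ (∀ x, Antitone fun ϑ : ℝ => h (x + ϑ • 𝒜))

/-- The class `𝒱_𝒜`. -/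
def MemV {d : ℕ} (𝒜 : Fin d → ℝ) (h : (Fin d → ℝ) → ℝ) : Prop :=
  ∃ g₁ g₂ : (Fin d → ℝ) → ℝ, h = g₁ + g₂ ∧ AMonotonic 𝒜 g₁ ∧ AMonotonic 𝒜 g₂ ∧
    ∃ lam > (0 : ℝ), ∃ β ∈ Set.Ico (0 : ℝ) 2,
      ∀ x, |g₁ x| ≤ lam * Real.exp (nrm x ^ β) ∧ |g₂ x| ≤ lam * Real.exp (nrm x ^ β)


open scoped ENNReal NNReal

section AuxLemmas

/-! ### Auxiliary lemmas -/

lemma aux_lintegral_fin_prod {n : ℕ} {α : Type*} [MeasurableSpace α]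
    (μ : Fin n → Measure α) [∀ i, SigmaFinite (μ i)]
    (f : Fin n → α → ℝ≥0∞) (hf : ∀ i, Measurable (f i)) :
    ∫⁻ x : Fin n → α, ∏ i, f i (x i) ∂Measure.pi μ = ∏ i, ∫⁻ y, f i y ∂μ i := by
  induction n with
  | zero => simp
  | succ n ih =>
    have h := (measurePreserving_piFinSuccAbove μ 0).symm
    rw [← h.lintegral_comp_emb (MeasurableEquiv.measurableEmbedding _)]
    simp_rw [MeasurableEquiv.piFinSuccAbove_symm_apply, Fin.insertNthEquiv,
      Fin.prod_univ_succ, Fin.insertNth_zero]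
    simp only [Fin.zero_succAbove, Function.comp_def, Fin.cons_zero, Fin.cons_succ,
      Equiv.coe_fn_mk, cast_eq]
    have hmeas : Measurable (fun y : Fin n → α => ∏ j : Fin n, f j.succ (y j)) := by
      exact Finset.measurable_prod _ fun j _ => (hf j.succ).comp (measurable_pi_apply j)
    rw [lintegral_prod_mul (f := f 0) (g := fun y : Fin n → α => ∏ j : Fin n, f j.succ (y j))
      (hf 0).aemeasurable hmeas.aemeasurable]
    rw [ih (fun j => μ j.succ) (fun j => f j.succ) (fun j => hf j.succ)]

lemma aux_indicator_box {n : ℕ} (s : Fin n → Set ℝ) (f : Fin n → ℝ → ℝ≥0∞) (x : Fin n → ℝ) :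
    (Set.pi Set.univ s).indicator (fun x => ∏ i, f i (x i)) x
      = ∏ i, ((s i).indicator (f i)) (x i) := by
  by_cases hx : x ∈ Set.pi Set.univ s
  · rw [Set.indicator_of_mem hx]
    exact Finset.prod_congr rfl fun i _ => (Set.indicator_of_mem (hx i (Set.mem_univ i)) _).symm
  · rw [Set.indicator_of_notMem hx]
    rw [Set.mem_univ_pi] at hx
    push_neg at hx
    obtain ⟨i, hi⟩ := hx
    exact (Finset.prod_eq_zero (Finset.mem_univ i)
      (by rw [Set.indicator_of_notMem hi])).symm

/-- The density of the standard Gaussian on `ℝ^d`. -/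
def dens {d : ℕ} (x : Fin d → ℝ) : ℝ := ∏ i, gaussianPDFReal 0 1 (x i)

lemma dens_meas {d : ℕ} : Measurable (dens (d := d)) :=
  Finset.measurable_prod _ fun i _ =>
    (measurable_gaussianPDFReal 0 1).comp (measurable_pi_apply i)

lemma dens_nonneg {d : ℕ} (x : Fin d → ℝ) : 0 ≤ dens x :=
  Finset.prod_nonneg fun i _ => gaussianPDFReal_nonneg 0 1 _

lemma stdGaussian_eq (d : ℕ) :
    stdGaussian d = (volume : Measure (Fin d → ℝ)).withDensity
      (fun x => ENNReal.ofReal (dens x)) := by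
  refine Measure.pi_eq fun s hs => ?_
  rw [withDensity_apply _ (MeasurableSet.univ_pi hs)]
  have h : ∀ x : Fin d → ℝ, ENNReal.ofReal (dens x)
      = ∏ i, ENNReal.ofReal (gaussianPDFReal 0 1 (x i)) := fun x =>
    ENNReal.ofReal_prod_of_nonneg (fun i _ => gaussianPDFReal_nonneg 0 1 (x i))
  simp_rw [h]
  rw [← lintegral_indicator (MeasurableSet.univ_pi hs)]
  simp_rw [aux_indicator_box s (fun _ => fun y => ENNReal.ofReal (gaussianPDFReal 0 1 y))]
  rw [MeasureTheory.volume_pi, aux_lintegral_fin_prod _ _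
    (fun i => (Measurable.ennreal_ofReal (measurable_gaussianPDFReal 0 1)).indicator (hs i))]
  refine Finset.prod_congr rfl fun i _ => ?_
  rw [lintegral_indicator (hs i), gaussianReal_apply 0 one_ne_zero (s i)]
  rfl

lemma nrm_nonneg {k : ℕ} (x : Fin k → ℝ) : 0 ≤ nrm x := Real.sqrt_nonneg _

lemma nrm_eq_norm {k : ℕ} (x : Fin k → ℝ) :
    nrm x = ‖(WithLp.equiv 2 (Fin k → ℝ)).symm x‖ := by
  rw [EuclideanSpace.norm_eq]
  simp [nrm, sq_abs]

lemma nrm_sq_eq {k : ℕ} (x : Fin k → ℝ) : nrm x ^ 2 = ∑ i, x i ^ 2 :=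
  Real.sq_sqrt (Finset.sum_nonneg fun i _ => sq_nonneg _)

lemma nrm_add_le {k : ℕ} (x y : Fin k → ℝ) : nrm (x + y) ≤ nrm x + nrm y := by
  simp only [nrm_eq_norm, WithLp.equiv_symm_apply, WithLp.toLp_add]
  exact norm_add_le _ _

lemma nrm_sub_le {k : ℕ} (x y : Fin k → ℝ) : nrm (x - y) ≤ nrm x + nrm y := by
  simp only [nrm_eq_norm, WithLp.equiv_symm_apply, WithLp.toLp_sub]
  exact norm_sub_le _ _

lemma abs_nrm_sub_nrm {k : ℕ} (x y : Fin k → ℝ) : |nrm x - nrm y| ≤ nrm (x - y) := by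
  simp only [nrm_eq_norm, WithLp.equiv_symm_apply, WithLp.toLp_sub]
  exact abs_norm_sub_norm_le _ _

lemma abs_dot_le {k : ℕ} (x y : Fin k → ℝ) : |dot x y| ≤ nrm x * nrm y := by
  have h := abs_real_inner_le_norm ((WithLp.equiv 2 (Fin k → ℝ)).symm x)
    ((WithLp.equiv 2 (Fin k → ℝ)).symm y)
  rw [← nrm_eq_norm, ← nrm_eq_norm] at h
  have e : (inner ℝ ((WithLp.equiv 2 (Fin k → ℝ)).symm x)
      ((WithLp.equiv 2 (Fin k → ℝ)).symm y) : ℝ) = dot x y := by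
    rw [PiLp.inner_apply]
    simp [dot, RCLike.inner_apply, mul_comm]
  rw [e] at h
  exact h

lemma dot_sub_left {k : ℕ} (x y z : Fin k → ℝ) : dot (x - y) z = dot x z - dot y z := by
  simp [dot, sub_mul, Finset.sum_sub_distrib]

lemma nrm_cont {k : ℕ} : Continuous (nrm (k := k)) :=
  Real.continuous_sqrt.comp (continuous_finset_sum _ fun i _ => (continuous_apply i).pow 2)

lemma nrm_zero {k : ℕ} : nrm (0 : Fin k → ℝ) = 0 := by simp [nrm]

lemma aux_rpow_le_one_add_sq {u β : ℝ} (hu : 0 ≤ u) (hβ : 0 ≤ β) (hβ2 : β ≤ 2) :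
    u ^ β ≤ 1 + u ^ 2 := by
  rcases le_or_gt u 1 with h | h
  · have := Real.rpow_le_one hu h hβ
    nlinarith [sq_nonneg u]
  · have h1 : u ^ β ≤ u ^ (2 : ℝ) :=
      Real.rpow_le_rpow_of_exponent_le h.le hβ2
    rw [show (2:ℝ) = ((2:ℕ):ℝ) by norm_num, Real.rpow_natCast] at h1
    linarith

lemma aux_rpow_eps_bound {β : ℝ} (hβ : 0 ≤ β) (hβ2 : β < 2) {ε : ℝ} (hε : 0 < ε) :
    ∃ C ≥ (0:ℝ), ∀ s, 0 ≤ s → s ^ β ≤ C + ε * s ^ 2 := by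
  set K : ℝ := ε ^ (1 / (β - 2)) with hK
  have hKpos : 0 < K := Real.rpow_pos_of_pos hε _
  refine ⟨K ^ β, (Real.rpow_pos_of_pos hKpos β).le, fun s hs => ?_⟩
  have hu : 0 ≤ s / K := div_nonneg hs hKpos.le
  have h1 : (s / K) ^ β ≤ 1 + (s / K) ^ 2 := aux_rpow_le_one_add_sq hu hβ hβ2.le
  have h2 : s ^ β = K ^ β * (s / K) ^ β := by
    rw [← Real.mul_rpow hKpos.le hu, mul_div_cancel₀ _ hKpos.ne']
  have hKb : K ^ ((β : ℝ) - 2) = ε := by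
    rw [hK, ← Real.rpow_mul hε.le, one_div,
      inv_mul_cancel₀ (by intro h; rw [sub_eq_zero] at h; exact hβ2.ne h), Real.rpow_one]
  have h3 : K ^ β * (s / K) ^ 2 = ε * s ^ 2 := by
    rw [div_pow]
    rw [show K ^ β * (s ^ 2 / K ^ 2) = (K ^ β / K ^ 2) * s ^ 2 by ring]
    congr 1
    rw [← hKb, Real.rpow_sub hKpos, Real.rpow_two, sq]
  calc s ^ β = K ^ β * (s / K) ^ β := h2
    _ ≤ K ^ β * (1 + (s / K) ^ 2) := by
        exact mul_le_mul_of_nonneg_left h1 (Real.rpow_pos_of_pos hKpos β).le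
    _ = K ^ β + ε * s ^ 2 := by rw [mul_add, mul_one, h3]

lemma aux_abs_exp_sub_exp (a b : ℝ) :
    |Real.exp a - Real.exp b| ≤ Real.exp (max a b) * |a - b| := by
  wlog hab : b ≤ a with H
  · have := H b a (le_of_not_ge hab)
    rw [abs_sub_comm, max_comm, abs_sub_comm b a] at this
    exact this
  rw [max_eq_left hab,
    abs_of_nonneg (by linarith [Real.exp_le_exp.2 hab] : (0:ℝ) ≤ Real.exp a - Real.exp b),
    abs_of_nonneg (by linarith : (0:ℝ) ≤ a - b)]
  have h := Real.add_one_le_exp (b - a)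
  have h2 : Real.exp b = Real.exp a * Real.exp (b - a) := by
    rw [← Real.exp_add]; ring_nf
  nlinarith [Real.exp_pos a]

lemma aux_scalar_bound {β M : ℝ} (hβ : 0 ≤ β) (hβ2 : β < 2) (hM : 0 < M) :
    ∃ K > (0:ℝ), ∀ t, 0 ≤ t →
      Real.exp ((t+M)^β + M*t) * (1+t+M) ≤ K * Real.exp (3/16 * t^2) := by
  obtain ⟨C, hC0, hC⟩ := aux_rpow_eps_bound hβ hβ2 (by norm_num : (0:ℝ) < 1/32)
  refine ⟨Real.exp (C + M^2/16 + 32*M^2 + 4 + M), Real.exp_pos _, fun t ht => ?_⟩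
  have hb := hC (t + M) (by linarith)
  have h1 : (1+t+M) ≤ Real.exp (t+M) := by
    have := Real.add_one_le_exp (t+M)
    linarith
  have h2 : Real.exp ((t+M)^β + M*t) * (1+t+M)
      ≤ Real.exp ((t+M)^β + M*t + (t+M)) := by
    rw [Real.exp_add ((t+M)^β + M*t) (t+M)]
    exact mul_le_mul_of_nonneg_left h1 (Real.exp_pos _).le
  have h3 : (t+M)^β + M*t + (t+M) ≤ (C + M^2/16 + 32*M^2 + 4 + M) + 3/16*t^2 := by
    nlinarith [sq_nonneg (t/8 - 8*M), sq_nonneg (t/4 - 2), sq_nonneg (t - M)]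
  calc Real.exp ((t+M)^β + M*t) * (1+t+M) ≤ Real.exp ((t+M)^β + M*t + (t+M)) := h2
    _ ≤ Real.exp ((C + M^2/16 + 32*M^2 + 4 + M) + 3/16*t^2) := Real.exp_le_exp.2 h3
    _ = Real.exp (C + M^2/16 + 32*M^2 + 4 + M) * Real.exp (3/16*t^2) := Real.exp_add _ _

lemma memH_cont {d : ℕ} {g : (Fin d → ℝ) → ℝ} {α : ℝ} (hα : 0 < α) (hg : MemH α g) :
    Continuous g := by
  obtain ⟨β, ⟨hβ0, hβ2⟩, lam, hlam, hbd, hHol⟩ := hg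
  rw [continuous_iff_continuousAt]
  intro x₀
  have hB : Tendsto (fun x => lam * Real.exp (max (nrm x ^ β) (nrm x₀ ^ β)) * nrm (x - x₀) ^ α)
      (𝓝 x₀) (𝓝 0) := by
    have h0 : Tendsto (fun x : Fin d → ℝ => nrm (x - x₀)) (𝓝 x₀) (𝓝 0) := by
      have := (nrm_cont.comp (continuous_id.sub (continuous_const (y := x₀)))).tendsto x₀
      simpa [nrm_zero, Function.comp_def] using this
    have h1 : Tendsto (fun x : Fin d → ℝ => nrm (x - x₀) ^ α) (𝓝 x₀) (𝓝 0) := by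
      have h2 := (Real.continuousAt_rpow_const 0 α (Or.inr hα.le)).tendsto
      rw [Real.zero_rpow hα.ne'] at h2
      exact h2.comp h0
    have t1 : ContinuousAt (fun x : Fin d → ℝ => nrm x ^ β) x₀ :=
      (Real.continuousAt_rpow_const _ β (Or.inr hβ0)).comp nrm_cont.continuousAt
    have t2 : ContinuousAt (fun x : Fin d → ℝ =>
        lam * Real.exp (max (nrm x ^ β) (nrm x₀ ^ β))) x₀ :=
      (continuousAt_const.mul
        (Real.continuous_exp.continuousAt.comp (t1.max continuousAt_const)))
    have := t2.tendsto.mul h1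
    simpa using this
  rw [ContinuousAt, tendsto_iff_norm_sub_tendsto_zero]
  refine squeeze_zero (fun x => norm_nonneg _) (fun x => ?_) hB
  simpa [Real.norm_eq_abs] using hHol x x₀

lemma gpdf_eq (y : ℝ) : gaussianPDFReal 0 1 y
    = (Real.sqrt (2 * Real.pi))⁻¹ * Real.exp (-(y ^ 2 / 2)) := by
  simp [gaussianPDFReal, neg_div]

lemma dens_eq {d : ℕ} (x : Fin d → ℝ) :
    dens x = ((Real.sqrt (2 * Real.pi))⁻¹) ^ d * Real.exp (-((∑ i, x i ^ 2) / 2)) := by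
  unfold dens
  simp_rw [gpdf_eq]
  rw [Finset.prod_mul_distrib, Finset.prod_const, ← Real.exp_sum]
  congr 1
  · simp
  · rw [Finset.sum_neg_distrib, ← Finset.sum_div]

lemma integral_std {d : ℕ} (f : (Fin d → ℝ) → ℝ) :
    ∫ x, f x ∂(stdGaussian d) = ∫ x, dens x * f x ∂(volume : Measure (Fin d → ℝ)) := by
  rw [stdGaussian_eq]
  rw [show (fun x : Fin d → ℝ => ENNReal.ofReal (dens x))
      = (fun x : Fin d → ℝ => ((dens x).toNNReal : ℝ≥0∞)) from rfl]
  rw [integral_withDensity_eq_integral_smul dens_meas.real_toNNReal f]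
  congr 1
  funext x
  simp [NNReal.smul_def, Real.coe_toNNReal _ (dens_nonneg x)]

lemma integrable_std_iff {d : ℕ} (f : (Fin d → ℝ) → ℝ) :
    Integrable f (stdGaussian d) ↔
      Integrable (fun x => f x * dens x) (volume : Measure (Fin d → ℝ)) := by
  rw [stdGaussian_eq]
  rw [integrable_withDensity_iff dens_meas.ennreal_ofReal
    (Filter.Eventually.of_forall fun x => ENNReal.ofReal_lt_top)]
  constructor <;> intro h <;> refine h.congr (Filter.Eventually.of_forall fun x => ?_) <;>
    simp [ENNReal.toReal_ofReal (dens_nonneg x)]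

lemma integrable_W_dens {d : ℕ} :
    Integrable (fun x : Fin d → ℝ =>
      Real.exp (3/8 * ∑ i, x i ^ 2) * dens x) (volume : Measure (Fin d → ℝ)) := by
  have h : (fun x : Fin d → ℝ => Real.exp (3/8 * ∑ i, x i ^ 2) * dens x)
      = fun x => ∏ i, (fun y : ℝ => Real.exp (3/8 * y ^ 2) * gaussianPDFReal 0 1 y) (x i) := by
    funext x
    rw [Finset.prod_mul_distrib]
    unfold dens
    rw [← Real.exp_sum, Finset.mul_sum]
  rw [h]
  refine Integrable.fintype_prod (f := fun _ y => Real.exp (3/8 * y ^ 2) * gaussianPDFReal 0 1 y)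
    (fun _ => ?_)
  have h2 : (fun y : ℝ => Real.exp (3/8 * y ^ 2) * gaussianPDFReal 0 1 y)
      = fun y => (Real.sqrt (2 * Real.pi))⁻¹ * Real.exp (-(1/8 : ℝ) * y ^ 2) := by
    funext y
    rw [gpdf_eq, ← mul_assoc, mul_comm (Real.exp _), mul_assoc, ← Real.exp_add]
    ring_nf
  rw [h2]
  exact (integrable_exp_neg_mul_sq (by norm_num : (0:ℝ) < 1/8)).const_mul _

lemma aux_unbiased {d : ℕ} (h : (Fin d → ℝ) → ℝ) (θ : Fin d → ℝ) :
    ∫ x, h (x + θ) * Real.exp (-(dot θ x) - nrm θ ^ 2 / 2) ∂(stdGaussian d)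
      = ∫ x, h x ∂(stdGaussian d) := by
  rw [integral_std, integral_std]
  have key : ∀ x : Fin d → ℝ,
      dens x * (h (x + θ) * Real.exp (-(dot θ x) - nrm θ ^ 2 / 2))
        = dens (x + θ) * h (x + θ) := by
    intro x
    rw [dens_eq, dens_eq, nrm_sq_eq]
    have hsum : ∑ i, (x + θ) i ^ 2 = (∑ i, x i ^ 2) + (2 * dot θ x + ∑ i, θ i ^ 2) := by
      simp only [Pi.add_apply, dot, Finset.mul_sum]
      rw [← Finset.sum_add_distrib, ← Finset.sum_add_distrib]
      exact Finset.sum_congr rfl fun i _ => by ring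
    have hexp : Real.exp (-((∑ i, x i ^ 2) / 2)) * Real.exp (-(dot θ x) - (∑ i, θ i ^ 2) / 2)
        = Real.exp (-((∑ i, (x + θ) i ^ 2) / 2)) := by
      rw [← Real.exp_add]
      congr 1
      rw [hsum]
      ring
    rw [← hexp]
    ring
  simp_rw [key]
  exact integral_add_right_eq_self (fun y => dens y * h y) θ

end AuxLemmas

/-- The integrand of the importance sampling estimator. -/
def isF {d : ℕ} (g : (Fin d → ℝ) → ℝ) (θ : Fin d → ℝ) (x : Fin d → ℝ) : ℝ :=
  g (x + θ) * Real.exp (-(dot θ x) - nrm θ ^ 2 / 2)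

section Bounds

variable {d : ℕ} {g : (Fin d → ℝ) → ℝ} {α β lam M K : ℝ}

lemma expE_le (θ x : Fin d → ℝ) (hθ : nrm θ ≤ M) :
    Real.exp (-(dot θ x) - nrm θ ^ 2 / 2) ≤ Real.exp (M * nrm x) := by
  apply Real.exp_le_exp.2
  have h1 := abs_le.1 (abs_dot_le θ x)
  nlinarith [nrm_nonneg x, nrm_nonneg θ, sq_nonneg (nrm θ)]

lemma isF_bound (hβ0 : 0 ≤ β) (hlam : 0 < lam) (hM : 0 < M)
    (hbd : ∀ x, |g x| ≤ lam * Real.exp (nrm x ^ β))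
    (hKb : ∀ t, 0 ≤ t → Real.exp ((t+M)^β + M*t) * (1+t+M) ≤ K * Real.exp (3/16 * t^2))
    (θ : Fin d → ℝ) (hθ : nrm θ ≤ M) (x : Fin d → ℝ) :
    |isF g θ x| ≤ lam * K * Real.exp (3/16 * nrm x ^ 2) := by
  set t := nrm x with htdef
  have ht : 0 ≤ t := nrm_nonneg x
  have hnb : nrm (x + θ) ^ β ≤ (t + M) ^ β :=
    Real.rpow_le_rpow (nrm_nonneg _) (le_trans (nrm_add_le x θ) (by linarith)) hβ0
  have habs : |isF g θ x| = |g (x + θ)| * Real.exp (-(dot θ x) - nrm θ ^ 2 / 2) := by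
    rw [isF, abs_mul, abs_of_pos (Real.exp_pos _)]
  rw [habs]
  calc |g (x + θ)| * Real.exp (-(dot θ x) - nrm θ ^ 2 / 2)
      ≤ (lam * Real.exp ((t + M) ^ β)) * Real.exp (M * t) := by
        apply mul_le_mul _ (expE_le θ x hθ) (Real.exp_pos _).le
          (by positivity)
        exact le_trans (hbd (x + θ))
          (mul_le_mul_of_nonneg_left (Real.exp_le_exp.2 hnb) hlam.le)
    _ = lam * Real.exp ((t + M) ^ β + M * t) := by rw [Real.exp_add, mul_assoc]
    _ ≤ lam * (Real.exp ((t + M) ^ β + M * t) * (1 + t + M)) := by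
        apply mul_le_mul_of_nonneg_left _ hlam.le
        nlinarith [Real.exp_pos ((t + M) ^ β + M * t)]
    _ ≤ lam * (K * Real.exp (3/16 * t ^ 2)) :=
        mul_le_mul_of_nonneg_left (hKb t ht) hlam.le
    _ = lam * K * Real.exp (3/16 * t ^ 2) := by ring

lemma isF_diff_bound (hα0 : 0 < α) (hα1 : α ≤ 1) (hβ0 : 0 ≤ β) (hlam : 0 < lam) (hM : 0 < M)
    (hbd : ∀ x, |g x| ≤ lam * Real.exp (nrm x ^ β))
    (hHol : ∀ x y, |g x - g y| ≤ lam * Real.exp (max (nrm x ^ β) (nrm y ^ β)) * nrm (x - y) ^ α)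
    (hKb : ∀ t, 0 ≤ t → Real.exp ((t+M)^β + M*t) * (1+t+M) ≤ K * Real.exp (3/16 * t^2))
    (θ θ' : Fin d → ℝ) (hθ : nrm θ ≤ M) (hθ' : nrm θ' ≤ M) (x : Fin d → ℝ) :
    |isF g θ x - isF g θ' x| ≤
      nrm (θ - θ') ^ α *
        (lam * max 1 ((2*M) ^ ((1:ℝ)-α)) * K * Real.exp (3/16 * nrm x ^ 2)) := by
  set t := nrm x with htdef
  have ht : 0 ≤ t := nrm_nonneg x
  set ρ := nrm (θ - θ') with hρdef
  have hρ0 : 0 ≤ ρ := nrm_nonneg _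
  have hρ2M : ρ ≤ 2 * M := le_trans (nrm_sub_le θ θ') (by linarith)
  set A := max 1 ((2*M) ^ ((1:ℝ)-α)) with hAdef
  have hA1 : (1:ℝ) ≤ A := le_max_left _ _
  have hA2 : (2*M) ^ ((1:ℝ)-α) ≤ A := le_max_right _ _
  have hρα : 0 ≤ ρ ^ α := Real.rpow_nonneg hρ0 _
  -- ρ ≤ (2M)^(1-α) * ρ^α
  have hρle : ρ ≤ (2*M) ^ ((1:ℝ)-α) * ρ ^ α := by
    rcases eq_or_lt_of_le hρ0 with h0 | hpos
    · rw [← h0, Real.zero_rpow hα0.ne', mul_zero]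
    · have e1 : ρ = ρ ^ ((1:ℝ)-α) * ρ ^ α := by
        rw [← Real.rpow_add hpos, sub_add_cancel, Real.rpow_one]
      conv_lhs => rw [e1]
      have h1α : (0:ℝ) ≤ 1 - α := by linarith
      exact mul_le_mul_of_nonneg_right
        (Real.rpow_le_rpow hρ0 hρ2M h1α) hρα
  -- the exponents
  set Eθ := -(dot θ x) - nrm θ ^ 2 / 2 with hEθ
  set Eθ' := -(dot θ' x) - nrm θ' ^ 2 / 2 with hEθ'
  have hEb : Real.exp Eθ ≤ Real.exp (M * t) := expE_le θ x hθ
  have hEb' : Real.exp Eθ' ≤ Real.exp (M * t) := expE_le θ' x hθ'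
  have hmaxE : Real.exp (max Eθ Eθ') ≤ Real.exp (M * t) := by
    rcases max_cases Eθ Eθ' with ⟨h, _⟩ | ⟨h, _⟩ <;> rw [h]
    exacts [hEb, hEb']
  -- |Eθ - Eθ'| ≤ ρ * (t + M)
  have hEdiff : |Eθ - Eθ'| ≤ ρ * (t + M) := by
    have e1 : Eθ - Eθ' = -(dot (θ - θ') x) - (nrm θ ^ 2 - nrm θ' ^ 2) / 2 := by
      rw [hEθ, hEθ', dot_sub_left]
      ring
    have h1 := abs_le.1 (abs_dot_le (θ - θ') x)
    rw [← hρdef] at h1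
    have h2 := abs_le.1 (abs_nrm_sub_nrm θ θ')
    rw [← hρdef] at h2
    have h3 : |nrm θ ^ 2 - nrm θ' ^ 2| ≤ ρ * (2 * M) := by
      have e2 : nrm θ ^ 2 - nrm θ' ^ 2 = (nrm θ - nrm θ') * (nrm θ + nrm θ') := by ring
      have hnn : (0:ℝ) ≤ nrm θ + nrm θ' := by linarith [nrm_nonneg θ, nrm_nonneg θ']
      rw [e2, abs_mul, abs_of_nonneg hnn]
      apply mul_le_mul (abs_le.2 h2) _ hnn (by linarith)
      linarith [nrm_nonneg θ, nrm_nonneg θ']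
    rw [e1]
    have h4 := abs_le.1 h3
    rw [abs_le]
    constructor <;> nlinarith
  -- split into two terms
  have hsplit : isF g θ x - isF g θ' x
      = (g (x + θ) - g (x + θ')) * Real.exp Eθ + g (x + θ') * (Real.exp Eθ - Real.exp Eθ') := by
    rw [isF, isF]
    ring
  have hnb : nrm (x + θ) ^ β ≤ (t + M) ^ β :=
    Real.rpow_le_rpow (nrm_nonneg _) (le_trans (nrm_add_le x θ) (by linarith)) hβ0
  have hnb' : nrm (x + θ') ^ β ≤ (t + M) ^ β :=
    Real.rpow_le_rpow (nrm_nonneg _) (le_trans (nrm_add_le x θ') (by linarith)) hβ0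
  -- term A
  have hTA : |(g (x + θ) - g (x + θ')) * Real.exp Eθ|
      ≤ lam * Real.exp ((t + M) ^ β) * ρ ^ α * Real.exp (M * t) := by
    rw [abs_mul, abs_of_pos (Real.exp_pos _)]
    apply mul_le_mul _ hEb (Real.exp_pos _).le (by positivity)
    have := hHol (x + θ) (x + θ')
    have e3 : (x + θ) - (x + θ') = θ - θ' := by abel
    rw [e3, ← hρdef] at this
    refine le_trans this ?_
    apply mul_le_mul_of_nonneg_right _ hρα
    apply mul_le_mul_of_nonneg_left _ hlam.le
    exact Real.exp_le_exp.2 (max_le hnb hnb')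
  -- term B
  have hTB : |g (x + θ') * (Real.exp Eθ - Real.exp Eθ')|
      ≤ lam * Real.exp ((t + M) ^ β) * (Real.exp (M * t) * (ρ * (t + M))) := by
    rw [abs_mul]
    apply mul_le_mul
    · exact le_trans (hbd (x + θ'))
        (mul_le_mul_of_nonneg_left (Real.exp_le_exp.2 hnb') hlam.le)
    · refine le_trans (aux_abs_exp_sub_exp Eθ Eθ') ?_
      exact mul_le_mul hmaxE hEdiff (abs_nonneg _) (Real.exp_pos _).le
    · exact abs_nonneg _
    · positivity
  -- combine
  have hcomb : |isF g θ x - isF g θ' x|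
      ≤ lam * Real.exp ((t + M) ^ β) * Real.exp (M * t) * (ρ ^ α + ρ * (t + M)) := by
    rw [hsplit]
    refine le_trans (abs_add_le _ _) (le_trans (add_le_add hTA hTB) (le_of_eq ?_))
    ring
  refine le_trans hcomb ?_
  have hfin : ρ ^ α + ρ * (t + M) ≤ ρ ^ α * (A * (1 + t + M)) := by
    have htM : (0:ℝ) ≤ t + M := by linarith
    have h5 : ρ * (t + M) ≤ ((2*M) ^ ((1:ℝ)-α) * ρ ^ α) * (t + M) :=
      mul_le_mul_of_nonneg_right hρle htM
    have h6 : ((2*M) ^ ((1:ℝ)-α) * ρ ^ α) * (t + M) ≤ (A * ρ ^ α) * (t + M) :=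
      mul_le_mul_of_nonneg_right (mul_le_mul_of_nonneg_right hA2 hρα) htM
    have h7 : ρ ^ α ≤ A * ρ ^ α := le_mul_of_one_le_left hρα hA1
    have h8 : ρ ^ α * (A * (1 + t + M)) = A * ρ ^ α + (A * ρ ^ α) * (t + M) := by ring
    rw [h8]
    linarith
  calc lam * Real.exp ((t + M) ^ β) * Real.exp (M * t) * (ρ ^ α + ρ * (t + M))
      ≤ lam * Real.exp ((t + M) ^ β) * Real.exp (M * t) * (ρ ^ α * (A * (1 + t + M))) := by
        apply mul_le_mul_of_nonneg_left hfin (by positivity)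
    _ = ρ ^ α * (lam * A * (Real.exp ((t + M) ^ β + M * t) * (1 + t + M))) := by
        rw [Real.exp_add]
        ring
    _ ≤ ρ ^ α * (lam * A * (K * Real.exp (3/16 * t ^ 2))) := by
        apply mul_le_mul_of_nonneg_left _ hρα
        apply mul_le_mul_of_nonneg_left (hKb t ht) (by positivity)
    _ = ρ ^ α * (lam * A * K * Real.exp (3/16 * t ^ 2)) := by ring

end Bounds

/-- Lemma 2.12: for `g ∈ ℋ_α`, for every `M > 0` there is `C > 0` with
`E((M_n(θ, g) − M_n(θ', g))²) ≤ C |θ − θ'|^{2α} / n` for all `θ, θ'` in the ball of radius `M`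
and all `n ≥ 1`. -/
theorem stmt12 {d : ℕ}
    {Ω : Type*} [MeasurableSpace Ω] (P : Measure Ω) [IsProbabilityMeasure P]
    (Gs : ℕ → Ω → Fin d → ℝ)
    (hGmeas : ∀ i, Measurable (Gs i))
    (hGindep : iIndepFun Gs P)
    (hGlaw : ∀ i, Measure.map (Gs i) P = stdGaussian d)
    (g : (Fin d → ℝ) → ℝ) (α : ℝ) (hα : α ∈ Set.Ioc (0 : ℝ) 1) (hg : MemH α g) :
    ∀ M > (0 : ℝ), ∃ C > (0 : ℝ), ∀ θ θ' : Fin d → ℝ, nrm θ ≤ M → nrm θ' ≤ M →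
      ∀ n : ℕ, 1 ≤ n →
        ∫⁻ ω, ENNReal.ofReal ((Mn Gs n θ g ω - Mn Gs n θ' g ω) ^ 2) ∂P ≤
          ENNReal.ofReal (C * nrm (θ - θ') ^ (2 * α) / n) := by
  obtain ⟨hα0, hα1⟩ := hα
  obtain ⟨β, ⟨hβ0, hβ2⟩, lam, hlam, hbd, hHol⟩ := hg
  have hgcont : Continuous g := memH_cont hα0 ⟨β, ⟨hβ0, hβ2⟩, lam, hlam, hbd, hHol⟩
  intro M hM
  obtain ⟨K, hK, hKb⟩ := aux_scalar_bound hβ0 hβ2 hM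
  set A : ℝ := max 1 ((2*M) ^ ((1:ℝ)-α)) with hA
  have hA0 : (0:ℝ) < A := lt_of_lt_of_le one_pos (le_max_left _ _)
  set W : (Fin d → ℝ) → ℝ := fun x => Real.exp (3/8 * nrm x ^ 2) with hWdef
  have hWcont : Continuous W := by
    rw [hWdef]
    exact Real.continuous_exp.comp (continuous_const.mul (nrm_cont.pow 2))
  have hWint : Integrable W (stdGaussian d) := by
    rw [integrable_std_iff]
    have h : (fun x : Fin d → ℝ => W x * dens x)
        = fun x => Real.exp (3/8 * ∑ i, x i ^ 2) * dens x := by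
      funext x
      simp only [hWdef, nrm_sq_eq]
    rw [h]
    exact integrable_W_dens
  have hW'cont : Continuous (fun x : Fin d → ℝ => Real.exp (3/16 * nrm x ^ 2)) :=
    Real.continuous_exp.comp (continuous_const.mul (nrm_cont.pow 2))
  have hW'int : Integrable (fun x : Fin d → ℝ => Real.exp (3/16 * nrm x ^ 2))
      (stdGaussian d) := by
    apply Integrable.mono' hWint hW'cont.aestronglyMeasurable
    refine Filter.Eventually.of_forall fun x => ?_
    rw [Real.norm_eq_abs, abs_of_pos (Real.exp_pos _), hWdef]
    exact Real.exp_le_exp.2 (by nlinarith [sq_nonneg (nrm x)])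
  set I : ℝ := ∫ x, W x ∂(stdGaussian d) with hI
  have hI0 : 0 ≤ I := integral_nonneg fun x => (Real.exp_pos _).le
  set c : ℝ := lam * A * K with hc
  have hc0 : (0:ℝ) < c := by positivity
  have hCpos : (0:ℝ) < c^2 * I + 1 := by nlinarith [mul_nonneg (sq_nonneg c) hI0]
  refine ⟨c^2 * I + 1, hCpos, fun θ θ' hθ hθ' n hn => ?_⟩
  have hn0 : (0:ℝ) < n := by exact_mod_cast Nat.lt_of_lt_of_le Nat.zero_lt_one hn
  set ρ : ℝ := nrm (θ - θ') with hρdef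
  have hρ0 : (0:ℝ) ≤ ρ := nrm_nonneg _
  have hρ2α : (0:ℝ) ≤ ρ ^ (2*α) := Real.rpow_nonneg hρ0 _
  set Φ : (Fin d → ℝ) → ℝ := fun x => isF g θ x - isF g θ' x with hΦdef
  have hFcont : ∀ ϑ : Fin d → ℝ, Continuous (isF g ϑ) := fun ϑ => by
    apply Continuous.mul (hgcont.comp (continuous_id.add continuous_const))
    apply Real.continuous_exp.comp
    apply Continuous.sub _ continuous_const
    apply Continuous.neg
    exact continuous_finset_sum _ fun i _ => continuous_const.mul (continuous_apply i)
  have hΦcont : Continuous Φ := (hFcont θ).sub (hFcont θ')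
  have hΦm : Measurable Φ := hΦcont.measurable
  -- pointwise bounds
  have hΦb : ∀ x, |Φ x| ≤ ρ ^ α * (c * Real.exp (3/16 * nrm x ^ 2)) := fun x => by
    have h := isF_diff_bound hα0 hα1 hβ0 hlam hM hbd hHol hKb θ θ' hθ hθ' x
    rw [hΦdef, hc, hA]
    calc |isF g θ x - isF g θ' x|
        ≤ nrm (θ - θ') ^ α *
          (lam * max 1 ((2*M) ^ ((1:ℝ)-α)) * K * Real.exp (3/16 * nrm x ^ 2)) := h
      _ = nrm (θ - θ') ^ α *
          (lam * max 1 ((2*M) ^ ((1:ℝ)-α)) * K * Real.exp (3/16 * nrm x ^ 2)) := rfl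
  have hΦsq : ∀ x, Φ x ^ 2 ≤ ρ ^ (2*α) * (c^2 * W x) := fun x => by
    have h1 : Φ x ^ 2 ≤ (ρ ^ α * (c * Real.exp (3/16 * nrm x ^ 2))) ^ 2 := by
      rw [← sq_abs]
      exact pow_le_pow_left₀ (abs_nonneg _) (hΦb x) 2
    refine le_trans h1 (le_of_eq ?_)
    have e2 : (ρ ^ α) ^ (2:ℕ) = ρ ^ (2*α) := by
      rw [← Real.rpow_natCast (ρ ^ α) 2, ← Real.rpow_mul hρ0]
      norm_num [mul_comm]
    have e3 : (Real.exp (3/16 * nrm x ^ 2)) ^ (2:ℕ) = W x := by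
      rw [hWdef, sq, ← Real.exp_add]
      congr 1
      ring
    calc (ρ ^ α * (c * Real.exp (3/16 * nrm x ^ 2))) ^ 2
        = (ρ ^ α) ^ (2:ℕ) * (c ^ 2 * (Real.exp (3/16 * nrm x ^ 2)) ^ (2:ℕ)) := by ring
      _ = ρ ^ (2*α) * (c^2 * W x) := by rw [e2, e3]
  -- integrability over the Gaussian
  have hΦ2int : Integrable (fun x => Φ x ^ 2) (stdGaussian d) := by
    apply Integrable.mono' ((hWint.const_mul (c^2)).const_mul (ρ ^ (2*α)))
      ((hΦcont.pow 2).aestronglyMeasurable)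
    refine Filter.Eventually.of_forall fun x => ?_
    rw [Real.norm_eq_abs, abs_of_nonneg (sq_nonneg _)]
    exact le_trans (hΦsq x) (le_of_eq (by ring))
  have hΦ2bd : ∫ x, Φ x ^ 2 ∂(stdGaussian d) ≤ ρ ^ (2*α) * (c^2 * I) := by
    have hbint : Integrable (fun x => ρ ^ (2*α) * (c^2 * W x)) (stdGaussian d) :=
      (hWint.const_mul (c^2)).const_mul (ρ ^ (2*α))
    have h := integral_mono hΦ2int hbint hΦsq
    rwa [integral_const_mul, integral_const_mul, ← hI] at h
  have hFint : ∀ ϑ : Fin d → ℝ, nrm ϑ ≤ M → Integrable (isF g ϑ) (stdGaussian d) := by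
    intro ϑ hϑ
    apply Integrable.mono' (hW'int.const_mul (lam * K)) ((hFcont ϑ).aestronglyMeasurable)
    refine Filter.Eventually.of_forall fun x => ?_
    rw [Real.norm_eq_abs]
    exact isF_bound hβ0 hlam hM hbd hKb ϑ hϑ x
  have hΦint : Integrable Φ (stdGaussian d) := (hFint θ hθ).sub (hFint θ' hθ')
  -- zero mean
  have hΦ0 : ∫ x, Φ x ∂(stdGaussian d) = 0 := by
    rw [hΦdef]
    rw [integral_sub (hFint θ hθ) (hFint θ' hθ')]
    have e1 : ∫ x, isF g θ x ∂(stdGaussian d) = ∫ x, g x ∂(stdGaussian d) :=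
      aux_unbiased g θ
    have e2 : ∫ x, isF g θ' x ∂(stdGaussian d) = ∫ x, g x ∂(stdGaussian d) :=
      aux_unbiased g θ'
    rw [e1, e2, sub_self]
  -- transfer to Ω
  have hΦae : ∀ i : ℕ, AEStronglyMeasurable Φ (Measure.map (Gs i) P) := fun i => by
    rw [hGlaw i]; exact hΦcont.aestronglyMeasurable
  have hΦ2ae : ∀ i : ℕ, AEStronglyMeasurable (fun x => Φ x ^ 2) (Measure.map (Gs i) P) :=
    fun i => by rw [hGlaw i]; exact (hΦcont.pow 2).aestronglyMeasurable
  have hYint : ∀ i : ℕ, Integrable (fun ω => Φ (Gs i ω)) P := fun i => by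
    have h := (integrable_map_measure (hΦae i) (hGmeas i).aemeasurable).1
      (by rw [hGlaw i]; exact hΦint)
    simpa [Function.comp_def] using h
  have hY0 : ∀ i : ℕ, ∫ ω, Φ (Gs i ω) ∂P = 0 := fun i => by
    have h := integral_map (hGmeas i).aemeasurable (hΦae i)
    rw [hGlaw i, hΦ0] at h
    exact h.symm
  have hY2int : ∀ i : ℕ, Integrable (fun ω => Φ (Gs i ω) ^ 2) P := fun i => by
    have h := (integrable_map_measure (hΦ2ae i) (hGmeas i).aemeasurable).1
      (by rw [hGlaw i]; exact hΦ2int)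
    simpa [Function.comp_def] using h
  have hY2val : ∀ i : ℕ, ∫ ω, Φ (Gs i ω) ^ 2 ∂P = ∫ x, Φ x ^ 2 ∂(stdGaussian d) := fun i => by
    have h := integral_map (f := fun x => Φ x ^ 2) (hGmeas i).aemeasurable (hΦ2ae i)
    rw [hGlaw i] at h
    exact h.symm
  have hInd : ∀ i j : ℕ, i ≠ j →
      IndepFun (fun ω => Φ (Gs i ω)) (fun ω => Φ (Gs j ω)) P := fun i j hij =>
    (hGindep.indepFun hij).comp hΦm hΦm
  have hpint : ∀ i j : ℕ, Integrable (fun ω => Φ (Gs i ω) * Φ (Gs j ω)) P := fun i j => by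
    rcases eq_or_ne i j with rfl | hij
    · refine (hY2int i).congr (Filter.Eventually.of_forall fun ω => ?_)
      simpa using pow_two (Φ (Gs i ω))
    · have h := (hInd i j hij).integrable_mul (hYint i) (hYint j)
      exact h
  have hpval : ∀ i j : ℕ, i ≠ j → ∫ ω, Φ (Gs i ω) * Φ (Gs j ω) ∂P = 0 := fun i j hij => by
    have h := IndepFun.integral_fun_mul_eq_mul_integral (hInd i j hij) (hYint i).aestronglyMeasurable
      (hYint j).aestronglyMeasurable
    rw [h, hY0 i, hY0 j, mul_zero]
  -- sum representation
  have hSsq : ∀ ω, (Mn Gs n θ g ω - Mn Gs n θ' g ω) ^ 2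
      = (1/(n:ℝ))^2 * ∑ i ∈ Finset.range n, ∑ j ∈ Finset.range n,
          Φ (Gs i ω) * Φ (Gs j ω) := fun ω => by
    have hrep : Mn Gs n θ g ω - Mn Gs n θ' g ω
        = (1/(n:ℝ)) * ∑ i ∈ Finset.range n, Φ (Gs i ω) := by
      rw [Mn, Mn, ← mul_sub, ← Finset.sum_sub_distrib]
      simp only [hΦdef, isF]
    rw [hrep, mul_pow, pow_two (∑ i ∈ Finset.range n, Φ (Gs i ω)), Finset.sum_mul_sum]
  have hinner : ∀ i : ℕ, Integrable
      (fun ω => ∑ j ∈ Finset.range n, Φ (Gs i ω) * Φ (Gs j ω)) P := fun i =>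
    integrable_finset_sum _ fun j _ => hpint i j
  have hS2int : Integrable (fun ω => (Mn Gs n θ g ω - Mn Gs n θ' g ω) ^ 2) P := by
    rw [show (fun ω => (Mn Gs n θ g ω - Mn Gs n θ' g ω) ^ 2)
        = fun ω => (1/(n:ℝ))^2 * ∑ i ∈ Finset.range n, ∑ j ∈ Finset.range n,
            Φ (Gs i ω) * Φ (Gs j ω) from funext hSsq]
    exact (integrable_finset_sum _ fun i _ => hinner i).const_mul _
  have hS2val : ∫ ω, (Mn Gs n θ g ω - Mn Gs n θ' g ω) ^ 2 ∂P
      = (1/(n:ℝ))^2 * ∑ i ∈ Finset.range n, ∑ j ∈ Finset.range n,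
          ∫ ω, Φ (Gs i ω) * Φ (Gs j ω) ∂P := by
    rw [show (fun ω => (Mn Gs n θ g ω - Mn Gs n θ' g ω) ^ 2)
        = fun ω => (1/(n:ℝ))^2 * ∑ i ∈ Finset.range n, ∑ j ∈ Finset.range n,
            Φ (Gs i ω) * Φ (Gs j ω) from funext hSsq]
    rw [integral_const_mul, integral_finset_sum _ (fun i _ => hinner i)]
    congr 1
    exact Finset.sum_congr rfl fun i _ => integral_finset_sum _ fun j _ => hpint i j
  set V : ℝ := ∫ x, Φ x ^ 2 ∂(stdGaussian d) with hV
  have hdiag : ∀ i ∈ Finset.range n,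
      ∑ j ∈ Finset.range n, ∫ ω, Φ (Gs i ω) * Φ (Gs j ω) ∂P = V := by
    intro i hi
    rw [Finset.sum_eq_single_of_mem i hi (fun j _ hne => hpval i j (Ne.symm hne))]
    rw [show (fun ω => Φ (Gs i ω) * Φ (Gs i ω)) = fun ω => Φ (Gs i ω) ^ 2 from
      funext fun ω => (pow_two _).symm]
    exact hY2val i
  have hV0 : 0 ≤ V := integral_nonneg fun x => sq_nonneg _
  have hS2 : ∫ ω, (Mn Gs n θ g ω - Mn Gs n θ' g ω) ^ 2 ∂P = V / n := by
    rw [hS2val, Finset.sum_congr rfl hdiag, Finset.sum_const, Finset.card_range,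
      nsmul_eq_mul]
    field_simp
  have hfinal : ∫ ω, (Mn Gs n θ g ω - Mn Gs n θ' g ω) ^ 2 ∂P
      ≤ (c^2 * I + 1) * ρ ^ (2*α) / n := by
    rw [hS2]
    gcongr
    nlinarith [hΦ2bd, hρ2α, mul_nonneg (mul_nonneg (sq_nonneg c) hI0) hρ2α]
  calc ∫⁻ ω, ENNReal.ofReal ((Mn Gs n θ g ω - Mn Gs n θ' g ω) ^ 2) ∂P
      = ENNReal.ofReal (∫ ω, (Mn Gs n θ g ω - Mn Gs n θ' g ω) ^ 2 ∂P) :=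
        (ofReal_integral_eq_lintegral_ofReal hS2int
          (Filter.Eventually.of_forall fun ω => sq_nonneg _)).symm
    _ ≤ ENNReal.ofReal ((c^2 * I + 1) * nrm (θ - θ') ^ (2*α) / n) := by
        apply ENNReal.ofReal_le_ofReal
        rw [← hρdef]
        exact hfinal

end
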